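/- arXiv:math/9910065 — 2 statements merged into one kernel-verified Lean document; each statement's English description precedes it below -/
import Mathlib

section
/- Let G be a group and C ⊆ G a normal cone whose induced relation ≥ is a partial order. Let f be a dominant and let e₁, e₂ ∈ G be commuting elements (e₁e₂ = e₂e₁). Then γ(f, e₁e₂) ≤ γ(f, e₁) + γ(f, e₂). -/
open Filter

/-- A subset `C` of a group is a *normal cone* if it contains `1`, is closed under
multiplication, and is invariant under conjugation. -/
def IsNormalCone {G : Type*} [Group G] (C : Set G) : Prop :=
  (1 : G) ∈ C ∧ (∀ f g : G, f ∈ C → g ∈ C → f * g ∈ C) ∧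
    (∀ f h : G, f ∈ C → h * f * h⁻¹ ∈ C)

/-- The relation `f ≥ g` induced by the cone `C`: `f * g⁻¹ ∈ C`. -/
def ConeGe {G : Type*} [Group G] (C : Set G) (f g : G) : Prop := f * g⁻¹ ∈ C

/-- `f` is a *dominant*: it lies in the cone, is not `1`, and some power of `f`
dominates any given element. -/
def IsDominant {G : Type*} [Group G] (C : Set G) (f : G) : Prop :=
  f ∈ C ∧ f ≠ 1 ∧ ∀ g : G, ∃ p : ℕ, ConeGe C (f ^ p) g

/-- `γ_k(f,g) = inf { p ∈ ℤ | f^p ≥ g^k }`. -/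
noncomputable def gammaK {G : Type*} [Group G] (C : Set G) (f g : G) (k : ℕ) : ℤ :=
  sInf {p : ℤ | ConeGe C (f ^ p) (g ^ k)}

section Aux
variable {G : Type*} [Group G] {C : Set G}

lemma cone_pow (hC : IsNormalCone C) {f : G} (hf : f ∈ C) : ∀ n : ℕ, f ^ n ∈ C := by
  intro n
  induction n with
  | zero => simpa using hC.1
  | succ n ih => rw [pow_succ]; exact hC.2.1 _ _ ih hf

lemma cone_zpow (hC : IsNormalCone C) {f : G} (hf : f ∈ C) {n : ℤ} (hn : 0 ≤ n) :
    f ^ n ∈ C := by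
  lift n to ℕ using hn
  rw [zpow_natCast]; exact cone_pow hC hf n

lemma key_mul (hC : IsNormalCone C) {f x y : G} {p q : ℤ}
    (h1 : ConeGe C (f ^ p) x) (h2 : ConeGe C (f ^ q) y) :
    ConeGe C (f ^ (p + q)) (x * y) := by
  have h := hC.2.1 _ _ h1 (hC.2.2 _ x h2)
  unfold ConeGe at *
  convert h using 1
  rw [zpow_add]; group

lemma no_neg_pow (hC : IsNormalCone C)
    (hanti : ∀ f g : G, ConeGe C f g → ConeGe C g f → f = g)
    {f : G} (hf : f ∈ C) (hf1 : f ≠ 1) {n : ℤ} (hn : n < 0) : f ^ n ∉ C := by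
  intro h
  have hpos : f ^ (-n) ∈ C := cone_zpow hC hf (by omega)
  have h1 : f ^ (-n) = 1 := by
    apply hanti
    · simpa [ConeGe] using hpos
    · simpa [ConeGe, zpow_neg] using h
  have hinv : f⁻¹ ∈ C := by
    have : f⁻¹ = f ^ (-n - 1) := by
      have : f ^ (-n) = f ^ (-n - 1) * f := by rw [← zpow_add_one]; ring_nf
      rw [this] at h1
      exact (eq_inv_of_mul_eq_one_left h1).symm
    rw [this]; exact cone_zpow hC hf (by omega)
  exact hf1 (hanti f 1 (by simpa [ConeGe] using hf) (by simpa [ConeGe] using hinv))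

lemma gamma_set_nonempty (hC : IsNormalCone C) {f : G} (hf : IsDominant C f) (g : G) :
    {p : ℤ | ConeGe C (f ^ p) g}.Nonempty := by
  obtain ⟨p, hp⟩ := hf.2.2 g
  exact ⟨(p : ℤ), by simpa [ConeGe, zpow_natCast] using hp⟩

lemma gamma_set_bddBelow (hC : IsNormalCone C)
    (hanti : ∀ f g : G, ConeGe C f g → ConeGe C g f → f = g)
    {f : G} (hf : IsDominant C f) (g : G) :
    BddBelow {p : ℤ | ConeGe C (f ^ p) g} := by
  obtain ⟨q, hq⟩ := hf.2.2 g⁻¹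
  have hq' : ConeGe C (f ^ (q : ℤ)) g⁻¹ := by simpa [ConeGe, zpow_natCast] using hq
  refine ⟨-(q : ℤ), fun p hp => ?_⟩
  by_contra hlt
  push_neg at hlt
  have := key_mul hC hp hq'
  simp only [ConeGe, mul_inv_cancel, inv_one, mul_one] at this
  exact no_neg_pow hC hanti hf.1 hf.2.1 (by omega : p + (q:ℤ) < 0) this

lemma gammaK_subadd (hC : IsNormalCone C)
    (hanti : ∀ f g : G, ConeGe C f g → ConeGe C g f → f = g)
    {f : G} (hf : IsDominant C f) {e₁ e₂ : G} (hcomm : e₁ * e₂ = e₂ * e₁) (k : ℕ) :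
    gammaK C f (e₁ * e₂) k ≤ gammaK C f e₁ k + gammaK C f e₂ k := by
  have h1 := Int.csInf_mem (gamma_set_nonempty hC hf (e₁ ^ k)) (gamma_set_bddBelow hC hanti hf _)
  have h2 := Int.csInf_mem (gamma_set_nonempty hC hf (e₂ ^ k)) (gamma_set_bddBelow hC hanti hf _)
  have hkey := key_mul hC h1 h2
  rw [← (Commute.mul_pow (by exact hcomm) k)] at hkey
  exact csInf_le (gamma_set_bddBelow hC hanti hf _) hkey

end Aux

/-- For a dominant `f` and commuting elements `e₁, e₂` one has
`γ(f, e₁e₂) ≤ γ(f, e₁) + γ(f, e₂)`. -/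
theorem statement6 {G : Type*} [Group G] (C : Set G) (hC : IsNormalCone C)
    (hanti : ∀ f g : G, ConeGe C f g → ConeGe C g f → f = g)
    (f e₁ e₂ : G) (hf : IsDominant C f) (hcomm : e₁ * e₂ = e₂ * e₁)
    (L₁ L₂ L₁₂ : ℝ)
    (hL₁ : Tendsto (fun k : ℕ => (gammaK C f e₁ k : ℝ) / (k : ℝ)) atTop (nhds L₁))
    (hL₂ : Tendsto (fun k : ℕ => (gammaK C f e₂ k : ℝ) / (k : ℝ)) atTop (nhds L₂))
    (hL₁₂ : Tendsto (fun k : ℕ => (gammaK C f (e₁ * e₂) k : ℝ) / (k : ℝ)) atTop (nhds L₁₂)) :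
    L₁₂ ≤ L₁ + L₂ := by
  have hev : ∀ᶠ k : ℕ in atTop,
      (gammaK C f (e₁ * e₂) k : ℝ) / (k : ℝ) ≤
        (gammaK C f e₁ k : ℝ) / (k : ℝ) + (gammaK C f e₂ k : ℝ) / (k : ℝ) := by
    filter_upwards [eventually_gt_atTop 0] with k hk
    rw [← add_div]
    have hk' : (0 : ℝ) < (k : ℝ) := by exact_mod_cast hk
    gcongr
    exact_mod_cast gammaK_subadd hC hanti hf hcomm k
  exact le_of_tendsto_of_tendsto hL₁₂ (hL₁.add hL₂) hev
end

section
/- Let G be a group and C ⊆ G a normal cone whose induced relation ≥ is a partial order. Let f be a dominant, h ∈ G, and set g = hfh⁻¹. Then γ(f,g) = γ(g,f) = 1. (In particular, the pseudo-distance κ(f,g) = max(log γ(f,g), log γ(g,f)) vanishes on conjugacy classes of dominants.) -/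
open Filter

lemma pow_mem_cone {G : Type*} [Group G] {C : Set G} (hC : IsNormalCone C) {f : G}
    (hf : f ∈ C) : ∀ n : ℕ, f ^ n ∈ C := by
  intro n
  induction n with
  | zero => simpa using hC.1
  | succ n ih => rw [pow_succ]; exact hC.2.1 _ _ ih hf

lemma zpow_mem_cone {G : Type*} [Group G] {C : Set G} (hC : IsNormalCone C) {f : G}
    (hf : f ∈ C) {m : ℤ} (hm : 0 ≤ m) : f ^ m ∈ C := by
  obtain ⟨n, rfl⟩ := Int.eq_ofNat_of_zero_le hm
  rw [zpow_natCast]; exact pow_mem_cone hC hf n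

lemma nonneg_of_zpow_mem {G : Type*} [Group G] {C : Set G} (hC : IsNormalCone C)
    (hanti : ∀ f g : G, ConeGe C f g → ConeGe C g f → f = g)
    {f : G} (hf : f ∈ C) (hf1 : f ≠ 1) {m : ℤ} (hm : f ^ m ∈ C) : 0 ≤ m := by
  by_contra hneg
  push_neg at hneg
  have h1 : f ^ (-m) ∈ C := zpow_mem_cone hC hf (by omega)
  have heq : f ^ m = 1 := by
    apply hanti
    · unfold ConeGe; simpa using hm
    · unfold ConeGe; simpa [zpow_neg] using h1
  have h2 : f ^ (-m - 1) ∈ C := zpow_mem_cone hC hf (by omega)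
  have h4 : f ^ (-m) = 1 := by rw [zpow_neg, heq, inv_one]
  have h3 : f ^ (-m - 1) = f⁻¹ := by
    have h5 : f ^ (-m - 1) * f = f ^ (-m) := by
      rw [← zpow_add_one]; ring_nf
    rw [h4] at h5
    exact eq_inv_of_mul_eq_one_left h5
  rw [h3] at h2
  have : f = 1 := by
    apply hanti
    · unfold ConeGe; simpa using hf
    · unfold ConeGe; simpa using h2
  exact hf1 this

lemma key_cone {G : Type*} [Group G] {C : Set G} (hC : IsNormalCone C) (f h : G)
    {q r : ℤ} (hq : f ^ q * h ∈ C) (hr : f ^ r * h⁻¹ ∈ C) (k : ℤ) :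
    f ^ (k + q + r) * h * f ^ (-k) * h⁻¹ ∈ C := by
  have h1 : (h * f ^ k) * (f ^ q * h) * (h * f ^ k)⁻¹ ∈ C := hC.2.2 _ _ hq
  have h2 := hC.2.1 _ _ hr h1
  have heq : f ^ r * h⁻¹ * ((h * f ^ k) * (f ^ q * h) * (h * f ^ k)⁻¹)
      = f ^ (k + q + r) * h * f ^ (-k) * h⁻¹ := by group
  rwa [heq] at h2

lemma lim_eq_one (γ : ℕ → ℤ) (c : ℤ) (hbd : ∀ k : ℕ, (k : ℤ) - c ≤ γ k ∧ γ k ≤ (k : ℤ) + c)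
    (A : ℝ) (hA : Tendsto (fun k : ℕ => (γ k : ℝ) / (k : ℝ)) atTop (nhds A)) : A = 1 := by
  have hdiv : Tendsto (fun k : ℕ => (c : ℝ) / (k : ℝ)) atTop (nhds 0) :=
    Tendsto.div_atTop tendsto_const_nhds tendsto_natCast_atTop_atTop
  have t1 : Tendsto (fun k : ℕ => 1 - (c : ℝ) / (k : ℝ)) atTop (nhds 1) := by
    simpa using tendsto_const_nhds.sub hdiv
  have t2 : Tendsto (fun k : ℕ => 1 + (c : ℝ) / (k : ℝ)) atTop (nhds 1) := by
    simpa using tendsto_const_nhds.add hdiv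
  have lim : Tendsto (fun k : ℕ => (γ k : ℝ) / (k : ℝ)) atTop (nhds 1) := by
    apply tendsto_of_tendsto_of_tendsto_of_le_of_le' t1 t2
    · filter_upwards [eventually_gt_atTop 0] with k hk
      have kpos : (0 : ℝ) < (k : ℝ) := by exact_mod_cast hk
      have hle : ((k : ℝ) - (c : ℝ)) ≤ (γ k : ℝ) := by exact_mod_cast (hbd k).1
      have : ((k : ℝ) - (c : ℝ)) / (k : ℝ) ≤ (γ k : ℝ) / (k : ℝ) :=
        (div_le_div_iff_of_pos_right kpos).mpr hle
      calc 1 - (c : ℝ) / (k : ℝ) = ((k : ℝ) - (c : ℝ)) / (k : ℝ) := by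
            field_simp
        _ ≤ (γ k : ℝ) / (k : ℝ) := this
    · filter_upwards [eventually_gt_atTop 0] with k hk
      have kpos : (0 : ℝ) < (k : ℝ) := by exact_mod_cast hk
      have hle : (γ k : ℝ) ≤ ((k : ℝ) + (c : ℝ)) := by exact_mod_cast (hbd k).2
      calc (γ k : ℝ) / (k : ℝ) ≤ ((k : ℝ) + (c : ℝ)) / (k : ℝ) := by
            exact (div_le_div_iff_of_pos_right kpos).mpr hle
        _ = 1 + (c : ℝ) / (k : ℝ) := by field_simp
  exact tendsto_nhds_unique hA lim

/-- If `g = h f h⁻¹` is a conjugate of the dominant `f`, then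
`γ(f,g) = γ(g,f) = 1`; in particular the pseudo-distance `κ` vanishes on
conjugacy classes of dominants. -/
theorem statement10 {G : Type*} [Group G] (C : Set G) (hC : IsNormalCone C)
    (hanti : ∀ f g : G, ConeGe C f g → ConeGe C g f → f = g)
    (f h : G) (hf : IsDominant C f)
    (A B : ℝ)
    (hA : Tendsto (fun k : ℕ => (gammaK C f (h * f * h⁻¹) k : ℝ) / (k : ℝ)) atTop (nhds A))
    (hB : Tendsto (fun k : ℕ => (gammaK C (h * f * h⁻¹) f k : ℝ) / (k : ℝ)) atTop (nhds B)) :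
    A = 1 ∧ B = 1 := by
  obtain ⟨hfC, hf1, hdom⟩ := hf
  obtain ⟨a, ha⟩ := hdom h⁻¹
  obtain ⟨b, hb⟩ := hdom h
  have ha' : f ^ (a : ℤ) * h ∈ C := by
    have := ha; unfold ConeGe at this
    rw [zpow_natCast]; simpa using this
  have hb' : f ^ (b : ℤ) * h⁻¹ ∈ C := by
    have := hb; unfold ConeGe at this
    rw [zpow_natCast]; exact this
  set g : G := h * f * h⁻¹ with hgdef
  set c : ℤ := (a : ℤ) + (b : ℤ) with hcdef
  have gzpow : ∀ m : ℤ, g ^ m = h * f ^ m * h⁻¹ := fun m => conj_zpow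
  -- f^{k+c} ≥ g^k for all integers k
  have FG : ∀ k : ℤ, f ^ (k + c) * (g ^ k)⁻¹ ∈ C := by
    intro k
    have h0 := key_cone hC f h ha' hb' k
    have heq : f ^ (k + (a : ℤ) + (b : ℤ)) * h * f ^ (-k) * h⁻¹
        = f ^ (k + c) * (h * f ^ k * h⁻¹)⁻¹ := by
      rw [hcdef, ← add_assoc]; group
    rw [heq] at h0
    rwa [gzpow k]
  -- g^{k+c} ≥ f^k for all integers k
  have GF : ∀ k : ℤ, g ^ (k + c) * (f ^ k)⁻¹ ∈ C := by
    intro k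
    have h0 := key_cone hC f h⁻¹ (q := (b : ℤ)) (r := (a : ℤ)) hb' (by simpa using ha') k
    have h1 := hC.2.2 _ h h0
    have heq : h * (f ^ (k + (b : ℤ) + (a : ℤ)) * h⁻¹ * f ^ (-k) * h⁻¹⁻¹) * h⁻¹
        = (h * f ^ (k + c) * h⁻¹) * (f ^ k)⁻¹ := by
      rw [hcdef, show k + (b : ℤ) + (a : ℤ) = k + ((a : ℤ) + (b : ℤ)) by ring]; group
    rw [heq] at h1
    rwa [gzpow (k + c)]
  have fnonneg : ∀ {m : ℤ}, f ^ m ∈ C → 0 ≤ m := fun hm =>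
    nonneg_of_zpow_mem hC hanti hfC hf1 hm
  -- bounds for gammaK C f g
  have bd1 : ∀ k : ℕ, (k : ℤ) - c ≤ gammaK C f g k ∧ gammaK C f g k ≤ (k : ℤ) + c := by
    intro k
    have hmem : ((k : ℤ) + c) ∈ {p : ℤ | ConeGe C (f ^ p) (g ^ k)} := by
      show ConeGe C (f ^ ((k : ℤ) + c)) (g ^ k)
      unfold ConeGe
      rw [← zpow_natCast g k]
      exact FG k
    have hlb : ∀ p ∈ {p : ℤ | ConeGe C (f ^ p) (g ^ k)}, (k : ℤ) - c ≤ p := by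
      intro p hp
      have hp' : f ^ p * (g ^ (k : ℤ))⁻¹ ∈ C := by
        have := hp; unfold ConeGe at this; rwa [← zpow_natCast g k] at this
      have hg1 : g ^ ((k : ℤ) - c + c) * (f ^ ((k : ℤ) - c))⁻¹ ∈ C := GF ((k : ℤ) - c)
      rw [sub_add_cancel] at hg1
      have hprod := hC.2.1 _ _ hp' hg1
      have heq : f ^ p * (g ^ (k : ℤ))⁻¹ * (g ^ (k : ℤ) * (f ^ ((k : ℤ) - c))⁻¹)
          = f ^ (p - ((k : ℤ) - c)) := by group
      rw [heq] at hprod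
      have := fnonneg hprod
      omega
    constructor
    · exact le_csInf ⟨_, hmem⟩ hlb
    · exact csInf_le ⟨(k : ℤ) - c, hlb⟩ hmem
  -- bounds for gammaK C g f
  have bd2 : ∀ k : ℕ, (k : ℤ) - c ≤ gammaK C g f k ∧ gammaK C g f k ≤ (k : ℤ) + c := by
    intro k
    have hmem : ((k : ℤ) + c) ∈ {p : ℤ | ConeGe C (g ^ p) (f ^ k)} := by
      show ConeGe C (g ^ ((k : ℤ) + c)) (f ^ k)
      unfold ConeGe
      rw [← zpow_natCast f k]
      exact GF k
    have hlb : ∀ p ∈ {p : ℤ | ConeGe C (g ^ p) (f ^ k)}, (k : ℤ) - c ≤ p := by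
      intro p hp
      have hp' : g ^ p * (f ^ (k : ℤ))⁻¹ ∈ C := by
        have := hp; unfold ConeGe at this; rwa [← zpow_natCast f k] at this
      have hf2 : f ^ ((k : ℤ) - c + c) * (g ^ ((k : ℤ) - c))⁻¹ ∈ C := FG ((k : ℤ) - c)
      rw [sub_add_cancel] at hf2
      have hprod := hC.2.1 _ _ hp' hf2
      have heq : g ^ p * (f ^ (k : ℤ))⁻¹ * (f ^ (k : ℤ) * (g ^ ((k : ℤ) - c))⁻¹)
          = g ^ (p - ((k : ℤ) - c)) := by group
      rw [heq] at hprod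
      have hconj := hC.2.2 _ h⁻¹ hprod
      rw [gzpow (p - ((k : ℤ) - c))] at hconj
      have hfm : f ^ (p - ((k : ℤ) - c)) ∈ C := by
        have heq2 : h⁻¹ * (h * f ^ (p - ((k : ℤ) - c)) * h⁻¹) * h⁻¹⁻¹
            = f ^ (p - ((k : ℤ) - c)) := by group
        rwa [heq2] at hconj
      have := fnonneg hfm
      omega
    constructor
    · exact le_csInf ⟨_, hmem⟩ hlb
    · exact csInf_le ⟨(k : ℤ) - c, hlb⟩ hmem
  exact ⟨lim_eq_one _ c bd1 A hA, lim_eq_one _ c bd2 B hB⟩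
end
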